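/- Assume the sharing probabilities are pairwise distinct (ρ_i ≠ ρ_j whenever i ≠ j). If c* is an optimal pushing strategy, then at most one index i satisfies 0 < c*_i < 1; for every other index j, either c*_j = 0 or c*_j = 1. -/

import Mathlib

/-- Auxiliary: an optimal strategy cannot have `c i < 1`, `0 < c j` with `ρ j < ρ i`
for distinct `i j`. -/
lemma stmt_1_aux (M : ℕ) (B : ℝ) (hB : 0 < B)
    (t ρ : Fin M → ℝ) (ht : ∀ i, 0 < t i)
    (c : Fin M → ℝ) (hc : ∀ i, 0 ≤ c i ∧ c i ≤ 1)
    (hopt : ∀ d : Fin M → ℝ, (∀ i, 0 ≤ d i ∧ d i ≤ 1) →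
      (∑ i, t i * (1 - d i)) * (1 - Real.exp (-B * ∑ k, t k * ρ k * d k)) ≤
      (∑ i, t i * (1 - c i)) * (1 - Real.exp (-B * ∑ k, t k * ρ k * c k)))
    (i j : Fin M) (hij : i ≠ j) (hi2 : c i < 1) (hj1 : 0 < c j)
    (hρ : ρ j < ρ i) : False := by
  set ε : ℝ := min (t i * (1 - c i)) (t j * c j) with hε
  have hεpos : 0 < ε := lt_min (mul_pos (ht i) (by linarith)) (mul_pos (ht j) hj1)
  have hεi : ε ≤ t i * (1 - c i) := min_le_left _ _
  have hεj : ε ≤ t j * c j := min_le_right _ _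
  have hti := ht i
  have htj := ht j
  have htine : t i ≠ 0 := (ht i).ne'
  have htjne : t j ≠ 0 := (ht j).ne'
  set d : Fin M → ℝ := fun k => if k = i then c i + ε / t i
    else if k = j then c j - ε / t j else c k with hd
  have hdc : ∀ k, 0 ≤ d k ∧ d k ≤ 1 := by
    intro k
    by_cases hk : k = i
    · subst hk
      constructor
      · have := (hc k).1
        have : 0 ≤ ε / t k := le_of_lt (div_pos hεpos (ht k))
        simp only [hd, if_pos rfl]
        linarith [(hc k).1]
      · simp only [hd, if_pos rfl]
        have : ε / t k ≤ 1 - c k := (div_le_iff₀ (ht k)).2 (by linarith [hεi])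
        linarith
    · by_cases hk' : k = j
      · subst hk'
        constructor
        · simp only [hd, if_neg hk, if_pos rfl, if_true]
          have : ε / t k ≤ c k := (div_le_iff₀ (ht k)).2 (by linarith [hεj])
          linarith
        · simp only [hd, if_neg hk, if_pos rfl, if_true]
          have : 0 < ε / t k := div_pos hεpos (ht k)
          linarith [(hc k).2]
      · simp only [hd, if_neg hk, if_neg hk']
        exact hc k
  -- first factor unchanged
  have hsum1 : ∑ k, t k * (1 - d k) = ∑ k, t k * (1 - c k) := by
    have h : ∀ k : Fin M, t k * (1 - d k) =
        t k * (1 - c k) + ((if k = i then -ε else 0) + (if k = j then ε else 0)) := by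
      intro k
      by_cases hk : k = i
      · subst hk
        have hkj : k ≠ j := hij
        simp only [hd, if_pos rfl, if_neg hkj, if_true]
        field_simp
        ring
      · by_cases hk' : k = j
        · subst hk'
          simp only [hd, if_neg hk, if_pos rfl, if_true]
          field_simp
          ring
        · simp only [hd, if_neg hk, if_neg hk']
          ring
    rw [Finset.sum_congr rfl (fun k _ => h k)]
    rw [Finset.sum_add_distrib, Finset.sum_add_distrib]
    simp [Finset.sum_ite_eq']
  -- exponent sum strictly increases
  have hsum2 : ∑ k, t k * ρ k * d k = (∑ k, t k * ρ k * c k) + ε * (ρ i - ρ j) := by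
    have h : ∀ k : Fin M, t k * ρ k * d k =
        t k * ρ k * c k + ((if k = i then ε * ρ i else 0) + (if k = j then -(ε * ρ j) else 0)) := by
      intro k
      by_cases hk : k = i
      · subst hk
        have hkj : k ≠ j := hij
        simp only [hd, if_pos rfl, if_neg hkj, if_true]
        field_simp
        ring
      · by_cases hk' : k = j
        · subst hk'
          simp only [hd, if_neg hk, if_pos rfl, if_true]
          field_simp
          ring
        · simp only [hd, if_neg hk, if_neg hk']
          ring
    rw [Finset.sum_congr rfl (fun k _ => h k)]
    rw [Finset.sum_add_distrib, Finset.sum_add_distrib]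
    simp [Finset.sum_ite_eq']
    ring
  -- first factor is positive
  have hA : 0 < ∑ k, t k * (1 - c k) := by
    have hterm : ∀ k ∈ Finset.univ, (0:ℝ) ≤ t k * (1 - c k) := fun k _ =>
      mul_nonneg (ht k).le (by linarith [(hc k).2])
    have := Finset.single_le_sum hterm (Finset.mem_univ i)
    have : 0 < t i * (1 - c i) := mul_pos (ht i) (by linarith)
    calc (0:ℝ) < t i * (1 - c i) := this
      _ ≤ _ := Finset.single_le_sum hterm (Finset.mem_univ i)
  -- strict increase of the objective
  have hlt : (∑ k, t k * (1 - c k)) * (1 - Real.exp (-B * ∑ k, t k * ρ k * c k)) <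
      (∑ k, t k * (1 - d k)) * (1 - Real.exp (-B * ∑ k, t k * ρ k * d k)) := by
    rw [hsum1, hsum2]
    have hexp : Real.exp (-B * ((∑ k, t k * ρ k * c k) + ε * (ρ i - ρ j))) <
        Real.exp (-B * ∑ k, t k * ρ k * c k) := by
      apply Real.exp_lt_exp.2
      have : 0 < ε * (ρ i - ρ j) := mul_pos hεpos (by linarith)
      nlinarith
    have h1 : 1 - Real.exp (-B * ∑ k, t k * ρ k * c k) <
        1 - Real.exp (-B * ((∑ k, t k * ρ k * c k) + ε * (ρ i - ρ j))) := by linarith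
    exact mul_lt_mul_of_pos_left h1 hA
  exact absurd (hopt d hdc) (not_le.2 hlt)

/-- With pairwise distinct sharing probabilities, an optimal pushing
strategy has at most one coordinate strictly between 0 and 1; all others are 0 or 1. -/
theorem stmt_1 (M : ℕ) (hM : 1 ≤ M) (B : ℝ) (hB : 0 < B)
    (t ρ : Fin M → ℝ) (ht : ∀ i, 0 < t i) (hρ : ∀ i, 0 < ρ i ∧ ρ i ≤ 1)
    (hdist : ∀ i j : Fin M, i ≠ j → ρ i ≠ ρ j)
    (c : Fin M → ℝ) (hc : ∀ i, 0 ≤ c i ∧ c i ≤ 1)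
    (hopt : ∀ d : Fin M → ℝ, (∀ i, 0 ≤ d i ∧ d i ≤ 1) →
      (∑ i, t i * (1 - d i)) * (1 - Real.exp (-B * ∑ k, t k * ρ k * d k)) ≤
      (∑ i, t i * (1 - c i)) * (1 - Real.exp (-B * ∑ k, t k * ρ k * c k))) :
    (∀ i j : Fin M, 0 < c i → c i < 1 → 0 < c j → c j < 1 → i = j) ∧
    (∀ i : Fin M, 0 < c i → c i < 1 → ∀ j : Fin M, j ≠ i → c j = 0 ∨ c j = 1) := by
  have key : ∀ i j : Fin M, 0 < c i → c i < 1 → 0 < c j → c j < 1 → i = j := by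
    intro i j hi1 hi2 hj1 hj2
    by_contra hij
    rcases lt_or_gt_of_ne (hdist i j hij) with h | h
    · exact stmt_1_aux M B hB t ρ ht c hc hopt j i (Ne.symm hij) hj2 hi1 h
    · exact stmt_1_aux M B hB t ρ ht c hc hopt i j hij hi2 hj1 h
  refine ⟨key, fun i hi1 hi2 j hji => ?_⟩
  by_contra hcon
  push_neg at hcon
  have hj1 : 0 < c j := lt_of_le_of_ne (hc j).1 (Ne.symm hcon.1)
  have hj2 : c j < 1 := lt_of_le_of_ne (hc j).2 hcon.2
  exact hji (key j i hj1 hj2 hi1 hi2)
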